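/- Let G=(V,A) be a finite directed acyclic graph, let B, D, E be subsets of V, let M be a d-separator between B and D given E, and let N ⊆ casc(B ∪ D ∪ M ∪ E). Then M ∪ N is a d-separator between B and D given E. -/

import Mathlib

/-- `IsTrail A n f` : `f 0, f 1, …, f n` is a trail in the directed graph with
arc relation `A` (each consecutive pair is joined by an arc in one direction or the other). -/
def IsTrail {V : Type*} (A : V → V → Prop) (n : ℕ) (f : ℕ → V) : Prop :=
  ∀ i < n, A (f i) (f (i+1)) ∨ A (f (i+1)) (f i)

/-- `IsVStruct A n f i` : the vertex `f i` is a v-structure of the trail `f 0, …, f n`,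
i.e. `i` is interior and both neighbouring arcs point towards `f i`. -/
def IsVStruct {V : Type*} (A : V → V → Prop) (n : ℕ) (f : ℕ → V) (i : ℕ) : Prop :=
  0 < i ∧ i < n ∧ A (f (i-1)) (f i) ∧ A (f (i+1)) (f i)

/-- `Cdsc A v = {v} ∪ dsc(v)` : `v` together with its descendants. -/
def Cdsc {V : Type*} (A : V → V → Prop) (v : V) : Set V :=
  {w | Relation.ReflTransGen A v w}

/-- `Casc A S = S ∪ asc(S)` : `S` together with its ascendants. -/
def Casc {V : Type*} (A : V → V → Prop) (S : Set V) : Set V :=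
  {u | ∃ s ∈ S, Relation.ReflTransGen A u s}

/-- The trail `f 0, …, f n` is active given `M` : every vertex of the trail that is not a
v-structure is not in `M`, and every v-structure `v` satisfies `cdsc(v) ∩ M ≠ ∅`. -/
def ActiveTrail {V : Type*} (A : V → V → Prop) (M : Set V) (n : ℕ) (f : ℕ → V) : Prop :=
  IsTrail A n f ∧
  (∀ i ≤ n, ¬ IsVStruct A n f i → f i ∉ M) ∧
  (∀ i ≤ n, IsVStruct A n f i → (Cdsc A (f i) ∩ M).Nonempty)

/-- `DSep A X Y M` : `M` d-separates `X` and `Y`, i.e. no trail between a vertex of `X`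
and a vertex of `Y` is active given `M`. -/
def DSep {V : Type*} (A : V → V → Prop) (X Y M : Set V) : Prop :=
  ∀ (n : ℕ) (f : ℕ → V), f 0 ∈ X → f n ∈ Y → ¬ ActiveTrail A M n f

/-- `Mb A B C E` : the Markov blanket of `B` in `C` given `E`, defined as
`{v ∈ C : v is not d-separated from B given E ∪ (C \ (B ∪ {v}))}`. -/
def Mb {V : Type*} (A : V → V → Prop) (B C E : Set V) : Set V :=
  {v | v ∈ C ∧ ¬ DSep A {v} B (E ∪ (C \ (B ∪ {v})))}

/-- The directed graph with arc relation `A` is acyclic. -/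
def Acyclic {V : Type*} (A : V → V → Prop) : Prop :=
  ∀ v, ¬ Relation.TransGen A v v

/-- `M` is a d-separator between `B` and `D` given the evidence set `E`. -/
def IsDSep {V : Type*} (A : V → V → Prop) (B D E M : Set V) : Prop :=
  DSep A B D (M ∪ E)

/-- `M` is a minimal d-separator between `B` and `D` given the evidence set `E`. -/
def IsMinDSep {V : Type*} (A : V → V → Prop) (B D E M : Set V) : Prop :=
  IsDSep A B D E M ∧ ∀ M' ⊂ M, ¬ IsDSep A B D E M'

-- auxiliary lemmas
lemma two_cycle {V : Type*} {A : V → V → Prop} (hA : Acyclic A) {x y : V}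
    (h1 : A x y) (h2 : A y x) : False :=
  hA x (Relation.TransGen.head h1 (Relation.TransGen.single h2))

lemma exists_chain {V : Type*} {A : V → V → Prop} {v s : V}
    (h : Relation.ReflTransGen A v s) :
    ∃ (k : ℕ) (q : ℕ → V), q 0 = v ∧ q k = s ∧ ∀ j < k, A (q j) (q (j+1)) := by
  induction h with
  | refl => exact ⟨0, fun _ => v, rfl, rfl, fun j hj => absurd hj (by omega)⟩
  | @tail b c hvb hbc ih =>
    obtain ⟨k, q, h0, hk, hcn⟩ := ih
    refine ⟨k+1, fun j => if j ≤ k then q j else c, by simp [h0], by simp, ?_⟩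
    intro j hj
    rcases Nat.lt_or_ge j k with h | h
    · simpa [Nat.le_of_lt h, Nat.succ_le_of_lt h] using hcn j h
    · have hjk : j = k := by omega
      subst hjk
      simpa [hk] using hbc

lemma chain_mem {V : Type*} {A : V → V → Prop} {v : V} {k : ℕ} {q : ℕ → V}
    (h0 : q 0 = v) (hcn : ∀ j < k, A (q j) (q (j+1))) :
    ∀ j ≤ k, Relation.ReflTransGen A v (q j) := by
  intro j
  induction j with
  | zero => intro _; rw [h0]
  | succ j ih => intro hj; exact (ih (by omega)).tail (hcn j (by omega))

open Classical in
noncomputable def badSet {V : Type*} (A : V → V → Prop) (ME : Set V) (n : ℕ) (f : ℕ → V) : Finset ℕ :=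
  (Finset.range (n+1)).filter fun i => IsVStruct A n f i ∧ Cdsc A (f i) ∩ ME = ∅

lemma key_lemma {V : Type*} {A : V → V → Prop} (hA : Acyclic A) {B D E M N : Set V}
    (hM : DSep A B D (M ∪ E)) (hN : N ⊆ Casc A (B ∪ D ∪ M ∪ E)) :
    ∀ (c n : ℕ) (f : ℕ → V), (badSet A (M ∪ E) n f).card = c →
      f 0 ∈ B → f n ∈ D → IsTrail A n f →
      (∀ i ≤ n, ¬ IsVStruct A n f i → f i ∉ M ∪ E) →
      (∀ i ≤ n, IsVStruct A n f i → (Cdsc A (f i) ∩ ((M ∪ N) ∪ E)).Nonempty) →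
      False := by
  intro c
  induction c using Nat.strong_induction_on with
  | _ c ih =>
  intro n f hc hf0 hfn htr hnv hv
  by_cases hex : ∃ i, i ≤ n ∧ IsVStruct A n f i ∧ Cdsc A (f i) ∩ (M ∪ E) = ∅
  case neg =>
    push_neg at hex
    exact hM n f hf0 hfn
      ⟨htr, hnv, fun i hi hvi => hex i hi hvi⟩
  case pos =>
    obtain ⟨i, hin, hvi, hbad⟩ := hex
    have hdisj : ∀ x, x ∈ Cdsc A (f i) → x ∉ M ∪ E := fun x hx hxm =>
      Set.eq_empty_iff_forall_notMem.mp hbad x ⟨hx, hxm⟩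
    obtain ⟨w, hwc, hwm⟩ := hv i hin hvi
    have hwN : w ∈ N := by
      rcases hwm with (hw | hw) | hw
      · exact absurd (Or.inl hw) (hdisj w hwc)
      · exact hw
      · exact absurd (Or.inr hw) (hdisj w hwc)
    obtain ⟨s, hs, hws⟩ := hN hwN
    have hvs : Relation.ReflTransGen A (f i) s := Relation.ReflTransGen.trans hwc hws
    have hsBD : s ∈ B ∨ s ∈ D := by
      rcases hs with ((h | h) | h) | h
      · exact Or.inl h
      · exact Or.inr h
      · exact absurd (Or.inl h) (hdisj s hvs)
      · exact absurd (Or.inr h) (hdisj s hvs)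
    obtain ⟨k, q, hq0, hqk, hqc⟩ := exists_chain hvs
    have hqmem : ∀ j ≤ k, q j ∈ Cdsc A (f i) := chain_mem hq0 hqc
    have hi0 : 0 < i := hvi.1
    have hiN : i < n := hvi.2.1
    have hibad : i ∈ badSet A (M ∪ E) n f := by
      simp only [badSet, Finset.mem_filter, Finset.mem_range]
      exact ⟨by omega, hvi, hbad⟩
    rcases hsBD with hsB | hsD
    · -- s ∈ B : replace the initial segment f 0, …, f i by the reversed path s, …, f i
      set n' := k + (n - i) with hn'
      set g : ℕ → V := fun j => if j ≤ k then q (k - j) else f (i + j - k) with hg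
      have hgq : ∀ j ≤ k, g j = q (k - j) := fun j hj => by simp [hg, hj]
      have hgk : ∀ j, k ≤ j → g j = f (i + j - k) := by
        intro j hj
        rcases eq_or_lt_of_le hj with h | h
        · subst h
          have e : i + k - k = i := by omega
          simp [hg, hq0, e]
        · simp [hg, Nat.not_le.mpr h]
      have hg0 : g 0 ∈ B := by
        have : g 0 = s := by
          rw [hgq 0 (Nat.zero_le _), Nat.sub_zero, hqk]
        rw [this]; exact hsB
      have hn'k : k < n' := by omega
      have hgn' : g n' = f n := by
        rw [hgk n' (le_of_lt hn'k)]; congr 1; omega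
      have htr' : IsTrail A n' g := by
        intro j hj
        rcases Nat.lt_or_ge j k with h | h
        · right
          rw [hgq j (le_of_lt h), hgq (j+1) h]
          have harc := hqc (k - j - 1) (by omega)
          have he : k - j - 1 + 1 = k - j := by omega
          rw [he] at harc
          have he2 : k - (j+1) = k - j - 1 := by omega
          rw [he2]
          exact harc
        · rw [hgk j h, hgk (j+1) (by omega)]
          have he : i + (j+1) - k = (i + j - k) + 1 := by omega
          rw [he]
          exact htr (i + j - k) (by omega)
      have hnvk : ∀ j ≤ k, ¬ IsVStruct A n' g j := by
        intro j hjk hvs'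
        obtain ⟨hj0, hjn, ha1, _⟩ := hvs'
        have e1 : g (j-1) = q (k - j + 1) := by
          rw [hgq (j-1) (by omega)]; congr 1; omega
        have e2 : g j = q (k - j) := hgq j hjk
        rw [e1, e2] at ha1
        exact two_cycle hA ha1 (hqc (k - j) (by omega))
      have hvequiv : ∀ j, k < j → (IsVStruct A n' g j ↔ IsVStruct A n f (i + j - k)) := by
        intro j hkj
        have e1 : g (j-1) = f (i + j - k - 1) := by
          rw [hgk (j-1) (by omega)]; congr 1; omega
        have e2 : g j = f (i + j - k) := hgk j (by omega)
        have e3 : g (j+1) = f (i + j - k + 1) := by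
          rw [hgk (j+1) (by omega)]; congr 1; omega
        constructor
        · rintro ⟨h0, h1, ha1, ha2⟩
          rw [e1, e2] at ha1; rw [e3, e2] at ha2
          exact ⟨by omega, by omega, ha1, ha2⟩
        · rintro ⟨h0, h1, ha1, ha2⟩
          rw [← e2, ← e1] at ha1; rw [← e2, ← e3] at ha2
          exact ⟨by omega, by omega, ha1, ha2⟩
      have hnv' : ∀ j ≤ n', ¬ IsVStruct A n' g j → g j ∉ M ∪ E := by
        intro j hj hnvj
        rcases le_or_gt j k with h | h
        · rw [hgq j h]; exact hdisj _ (hqmem _ (by omega))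
        · rw [hgk j (le_of_lt h)]
          exact hnv _ (by omega) (fun hf => hnvj ((hvequiv j h).mpr hf))
      have hv' : ∀ j ≤ n', IsVStruct A n' g j → (Cdsc A (g j) ∩ ((M ∪ N) ∪ E)).Nonempty := by
        intro j hj hvj
        have hkj : k < j := by
          by_contra h
          exact hnvk j (by omega) hvj
        rw [hgk j (le_of_lt hkj)]
        exact hv _ (by omega) ((hvequiv j hkj).mp hvj)
      have hcard : (badSet A (M ∪ E) n' g).card < c := by
        rw [← hc]
        calc (badSet A (M ∪ E) n' g).card
            ≤ ((badSet A (M ∪ E) n f).erase i).card := by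
              apply Finset.card_le_card_of_injOn (fun j => i + j - k)
              · intro j hj
                simp only [Finset.mem_coe] at hj ⊢
                simp only [badSet, Finset.mem_filter, Finset.mem_range] at hj
                obtain ⟨hjr, hjv, hje⟩ := hj
                have hkj : k < j := by
                  by_contra h
                  exact hnvk j (by omega) hjv
                have hfv : IsVStruct A n f (i + j - k) := (hvequiv j hkj).mp hjv
                rw [Finset.mem_erase]
                refine ⟨by omega, ?_⟩
                simp only [badSet, Finset.mem_filter, Finset.mem_range]
                refine ⟨by omega, hfv, ?_⟩
                rw [← hgk j (le_of_lt hkj)]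
                exact hje
              · intro j1 h1 j2 h2 he
                simp only [Finset.coe_filter, Set.mem_setOf_eq, badSet,
                  Finset.mem_coe, Finset.mem_filter, Finset.mem_range] at h1 h2
                have hk1 : k < j1 := by
                  by_contra h; exact hnvk j1 (by omega) h1.2.1
                have hk2 : k < j2 := by
                  by_contra h; exact hnvk j2 (by omega) h2.2.1
                dsimp only at he
                omega
          _ < (badSet A (M ∪ E) n f).card := Finset.card_erase_lt_of_mem hibad
      exact ih _ hcard n' g rfl hg0 (by rw [hgn']; exact hfn) htr' hnv' hv'
    · -- s ∈ D : replace the final segment f i, …, f n by the path f i, …, s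
      set n' := i + k with hn'
      set g : ℕ → V := fun j => if j ≤ i then f j else q (j - i) with hg
      have hgf : ∀ j ≤ i, g j = f j := fun j hj => by simp [hg, hj]
      have hgq2 : ∀ j, i ≤ j → g j = q (j - i) := by
        intro j hj
        rcases eq_or_lt_of_le hj with h | h
        · subst h
          simp [hg, hq0, Nat.sub_self]
        · simp [hg, Nat.not_le.mpr h]
      have hg0 : g 0 ∈ B := by rw [hgf 0 (by omega)]; exact hf0
      have hgn2 : g n' = s := by
        rw [hgq2 n' (by omega)]
        have e : n' - i = k := by omega
        rw [e, hqk]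
      have htr2 : IsTrail A n' g := by
        intro j hj
        rcases Nat.lt_or_ge j i with h | h
        · rw [hgf j (by omega), hgf (j+1) (by omega)]
          exact htr j (by omega)
        · left
          rw [hgq2 j h, hgq2 (j+1) (by omega)]
          have he : j + 1 - i = (j - i) + 1 := by omega
          rw [he]
          exact hqc (j - i) (by omega)
      have hnvk2 : ∀ j, i ≤ j → ¬ IsVStruct A n' g j := by
        intro j hij hvs'
        obtain ⟨hj0, hjn, _, ha2⟩ := hvs'
        have e1 : g j = q (j - i) := hgq2 j hij
        have e2 : g (j+1) = q (j - i + 1) := by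
          rw [hgq2 (j+1) (by omega)]; congr 1; omega
        rw [e1, e2] at ha2
        exact two_cycle hA ha2 (hqc (j - i) (by omega))
      have hvequiv2 : ∀ j, j < i → (IsVStruct A n' g j ↔ IsVStruct A n f j) := by
        intro j hji
        have e1 : g (j-1) = f (j-1) := hgf _ (by omega)
        have e2 : g j = f j := hgf _ (by omega)
        have e3 : g (j+1) = f (j+1) := hgf _ (by omega)
        constructor
        · rintro ⟨h0, h1, ha1, ha2⟩
          rw [e1, e2] at ha1; rw [e3, e2] at ha2
          exact ⟨h0, by omega, ha1, ha2⟩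
        · rintro ⟨h0, h1, ha1, ha2⟩
          rw [← e2, ← e1] at ha1; rw [← e2, ← e3] at ha2
          exact ⟨h0, by omega, ha1, ha2⟩
      have hnv2 : ∀ j ≤ n', ¬ IsVStruct A n' g j → g j ∉ M ∪ E := by
        intro j hj hnvj
        rcases Nat.lt_or_ge j i with h | h
        · rw [hgf j (by omega)]
          exact hnv j (by omega) (fun hf => hnvj ((hvequiv2 j h).mpr hf))
        · rw [hgq2 j h]; exact hdisj _ (hqmem _ (by omega))
      have hv2 : ∀ j ≤ n', IsVStruct A n' g j → (Cdsc A (g j) ∩ ((M ∪ N) ∪ E)).Nonempty := by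
        intro j hj hvj
        have hji : j < i := by
          by_contra h
          exact hnvk2 j (by omega) hvj
        rw [hgf j (by omega)]
        exact hv j (by omega) ((hvequiv2 j hji).mp hvj)
      have hcard2 : (badSet A (M ∪ E) n' g).card < c := by
        rw [← hc]
        refine lt_of_le_of_lt (Finset.card_le_card ?_) (Finset.card_erase_lt_of_mem hibad)
        intro j hj
        simp only [badSet, Finset.mem_filter, Finset.mem_range] at hj
        obtain ⟨hjr, hjv, hje⟩ := hj
        have hji : j < i := by by_contra h; exact hnvk2 j (by omega) hjv
        rw [Finset.mem_erase]
        refine ⟨by omega, ?_⟩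
        simp only [badSet, Finset.mem_filter, Finset.mem_range]
        refine ⟨by omega, (hvequiv2 j hji).mp hjv, ?_⟩
        rw [← hgf j (by omega)]
        exact hje
      exact ih _ hcard2 n' g rfl hg0 (by rw [hgn2]; exact hsD) htr2 hnv2 hv2

theorem stmt_9 {V : Type*} [Fintype V] (A : V → V → Prop) (hA : Acyclic A)
    (B D E M N : Set V) (hM : IsDSep A B D E M)
    (hN : N ⊆ Casc A (B ∪ D ∪ M ∪ E)) :
    IsDSep A B D E (M ∪ N) := by
  intro n f hf0 hfn hact
  obtain ⟨htr, hnv, hv⟩ := hact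
  refine key_lemma hA hM hN (badSet A (M ∪ E) n f).card n f rfl hf0 hfn htr ?_ ?_
  · intro i hi hnvi hmem
    refine hnv i hi hnvi ?_
    rcases hmem with h | h
    · exact Or.inl (Or.inl h)
    · exact Or.inr h
  · exact hv
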